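/- Let u_+ ≥ 0 ≥ u_- with u_+ > u_-, v_± > 0, and let v_*(ε) be the intermediate density of the two-rarefaction-wave Riemann solution. Then u_*(ε) = u_- + ((u_- - √(u_-² + 4ε v_-))/(2v_-))(v_*(ε) - v_-) satisfies u_*(ε) → 0 as ε → 0⁺. -/

import Mathlib

theorem ustar_rarefaction_limit_zero (um up vm vp : ℝ)
    (h1 : up ≥ 0) (h2 : 0 ≥ um) (h3 : up > um) (hvm : 0 < vm) (hvp : 0 < vp) :
    Filter.Tendsto (fun e : ℝ =>
      um + ((um - Real.sqrt (um ^ 2 + 4 * e * vm)) / (2 * vm)) *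
        ((up - um - ((up + Real.sqrt (up ^ 2 + 4 * e * vp)) / (2 * vp)) * vp + ((um - Real.sqrt (um ^ 2 + 4 * e * vm)) / (2 * vm)) * vm) / ((um - Real.sqrt (um ^ 2 + 4 * e * vm)) / (2 * vm) - (up + Real.sqrt (up ^ 2 + 4 * e * vp)) / (2 * vp)) - vm))
      (nhdsWithin 0 (Set.Ioi 0)) (nhds 0) := by
  have hsm : Real.sqrt (um ^ 2 + 4 * (0:ℝ) * vm) = -um := by
    rw [show um ^ 2 + 4 * (0:ℝ) * vm = um ^ 2 by ring, Real.sqrt_sq_eq_abs,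
      abs_of_nonpos h2]
  have hsp : Real.sqrt (up ^ 2 + 4 * (0:ℝ) * vp) = up := by
    rw [show up ^ 2 + 4 * (0:ℝ) * vp = up ^ 2 by ring, Real.sqrt_sq_eq_abs,
      abs_of_nonneg h1]
  have hA0 : (um - Real.sqrt (um ^ 2 + 4 * (0:ℝ) * vm)) / (2 * vm) = um / vm := by
    rw [hsm]; field_simp; ring
  have hB0 : (up + Real.sqrt (up ^ 2 + 4 * (0:ℝ) * vp)) / (2 * vp) = up / vp := by
    rw [hsp]; field_simp; ring
  have hdlt : um / vm - up / vp < 0 := by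
    rcases lt_or_eq_of_le h2 with h | h
    · have h4 : um / vm < 0 := div_neg_of_neg_of_pos h hvm
      have h5 : (0:ℝ) ≤ up / vp := div_nonneg h1 hvp.le
      linarith
    · have hup : 0 < up := by linarith
      have h4 : 0 < up / vp := div_pos hup hvp
      have h5 : um / vm = 0 := by rw [h, zero_div]
      linarith
  have hd : (um - Real.sqrt (um ^ 2 + 4 * (0:ℝ) * vm)) / (2 * vm) -
      (up + Real.sqrt (up ^ 2 + 4 * (0:ℝ) * vp)) / (2 * vp) ≠ 0 := by
    rw [hA0, hB0]; exact ne_of_lt hdlt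
  have hA : Continuous (fun e : ℝ => (um - Real.sqrt (um ^ 2 + 4 * e * vm)) / (2 * vm)) := by
    apply Continuous.div_const
    exact continuous_const.sub (Real.continuous_sqrt.comp (by continuity))
  have hB : Continuous (fun e : ℝ => (up + Real.sqrt (up ^ 2 + 4 * e * vp)) / (2 * vp)) := by
    apply Continuous.div_const
    exact continuous_const.add (Real.continuous_sqrt.comp (by continuity))
  have hC : ContinuousAt (fun e : ℝ =>
      um + ((um - Real.sqrt (um ^ 2 + 4 * e * vm)) / (2 * vm)) *
        ((up - um - ((up + Real.sqrt (up ^ 2 + 4 * e * vp)) / (2 * vp)) * vp + ((um - Real.sqrt (um ^ 2 + 4 * e * vm)) / (2 * vm)) * vm) / ((um - Real.sqrt (um ^ 2 + 4 * e * vm)) / (2 * vm) - (up + Real.sqrt (up ^ 2 + 4 * e * vp)) / (2 * vp)) - vm)) 0 := by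
    apply ContinuousAt.add continuousAt_const
    apply ContinuousAt.mul hA.continuousAt
    apply ContinuousAt.sub _ continuousAt_const
    exact ContinuousAt.div
      (((continuousAt_const.sub (hB.continuousAt.mul continuousAt_const)).add
        (hA.continuousAt.mul continuousAt_const)))
      (hA.continuousAt.sub hB.continuousAt) hd
  have hval : um + ((um - Real.sqrt (um ^ 2 + 4 * (0:ℝ) * vm)) / (2 * vm)) *
        ((up - um - ((up + Real.sqrt (up ^ 2 + 4 * (0:ℝ) * vp)) / (2 * vp)) * vp + ((um - Real.sqrt (um ^ 2 + 4 * (0:ℝ) * vm)) / (2 * vm)) * vm) / ((um - Real.sqrt (um ^ 2 + 4 * (0:ℝ) * vm)) / (2 * vm) - (up + Real.sqrt (up ^ 2 + 4 * (0:ℝ) * vp)) / (2 * vp)) - vm) = 0 := by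
    rw [hA0, hB0]
    have hnum : up - um - up / vp * vp + um / vm * vm = 0 := by field_simp; ring
    rw [hnum, zero_div]
    field_simp
    ring
  have := hC.tendsto
  rw [hval] at this
  exact this.mono_left nhdsWithin_le_nhds
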